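/- Let f : X → Y be a surjective uniform quotient map between Banach spaces (or more generally between metrically convex metric spaces). Then f is coarse co-Lipschitz: for every δ > 0 there exists c(δ) > 0 such that for every R ≥ δ, every y, y' ∈ Y with d(y,y') ≤ c(δ)R, and every x ∈ f⁻¹(y), there exists x' ∈ f⁻¹(y') with d(x,x') ≤ R. -/
import Mathlib

lemma uq_chain_aux {X Y : Type*} [MetricSpace X] [MetricSpace Y]
    (hYconv : ∀ x y : Y, ∀ t : ℝ, 0 ≤ t → t ≤ 1 →
      ∃ z : Y, dist x z = t * dist x y ∧ dist z y = (1 - t) * dist x y)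
    (f : X → Y) (ω : ℝ → ℝ) (δ : ℝ) (hδ : 0 < δ) (hω : 0 ≤ ω δ)
    (hlow : ∀ x : X, Metric.closedBall (f x) (ω δ) ⊆ f '' Metric.closedBall x δ) :
    ∀ n : ℕ, ∀ x : X, ∀ y' : Y, dist (f x) y' ≤ ((n : ℝ) + 1) * ω δ →
      ∃ x' : X, f x' = y' ∧ dist x x' ≤ ((n : ℝ) + 1) * δ := by
  intro n
  induction n with
  | zero =>
    intro x y' hd
    have hmem : y' ∈ Metric.closedBall (f x) (ω δ) := by
      rw [Metric.mem_closedBall, dist_comm]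
      simpa using hd
    obtain ⟨x', hx'mem, hfx'⟩ := hlow x hmem
    exact ⟨x', hfx', by simpa [dist_comm] using hx'mem⟩
  | succ n ih =>
    intro x y' hd
    push_cast at hd
    set d := dist (f x) y' with hddef
    have hd0 : 0 ≤ d := dist_nonneg
    have hn2 : (0:ℝ) < (n : ℝ) + 2 := by positivity
    obtain ⟨z, hz1, hz2⟩ := hYconv (f x) y' (1 / ((n:ℝ) + 2))
      (by positivity) (by rw [div_le_one hn2]; linarith)
    have hz1' : dist (f x) z ≤ ω δ := by
      rw [hz1]
      rw [div_mul_eq_mul_div, div_le_iff₀ hn2]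
      nlinarith
    have hmem : z ∈ Metric.closedBall (f x) (ω δ) := by
      rw [Metric.mem_closedBall, dist_comm]; exact hz1'
    obtain ⟨x₁, hx₁mem, hfx₁⟩ := hlow x hmem
    have hz2' : dist (f x₁) y' ≤ ((n:ℝ) + 1) * ω δ := by
      rw [hfx₁, hz2]
      have : (1 - 1 / ((n:ℝ) + 2)) = ((n:ℝ) + 1) / ((n:ℝ) + 2) := by
        field_simp
        ring
      rw [this, div_mul_eq_mul_div, div_le_iff₀ hn2]
      nlinarith
    obtain ⟨x', hfx', hdx'⟩ := ih x₁ y' hz2'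
    refine ⟨x', hfx', ?_⟩
    have htri := dist_triangle x x₁ x'
    have hx₁d : dist x x₁ ≤ δ := by simpa [dist_comm] using hx₁mem
    push_cast
    linarith

/-- A surjective uniform quotient map between metrically convex metric spaces
is coarse co-Lipschitz. -/
theorem uniformQuotient_coarse_coLipschitz
    {X Y : Type*} [MetricSpace X] [MetricSpace Y]
    (hXconv : ∀ x y : X, ∀ t : ℝ, 0 ≤ t → t ≤ 1 →
      ∃ z : X, dist x z = t * dist x y ∧ dist z y = (1 - t) * dist x y)
    (hYconv : ∀ x y : Y, ∀ t : ℝ, 0 ≤ t → t ≤ 1 →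
      ∃ z : Y, dist x z = t * dist x y ∧ dist z y = (1 - t) * dist x y)
    (f : X → Y) (hsurj : Function.Surjective f)
    (ω Ω : ℝ → ℝ) (hωmono : Monotone ω) (hΩmono : Monotone Ω)
    (hωpos : ∀ r : ℝ, 0 < r → 0 < ω r)
    (hΩ0 : Filter.Tendsto Ω (nhdsWithin 0 (Set.Ioi 0)) (nhds 0))
    (hquot : ∀ (x : X) (r : ℝ), 0 < r →
      Metric.closedBall (f x) (ω r) ⊆ f '' Metric.closedBall x r ∧
      f '' Metric.closedBall x r ⊆ Metric.closedBall (f x) (Ω r)) :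
    ∀ δ : ℝ, 0 < δ → ∃ c : ℝ, 0 < c ∧
      ∀ R : ℝ, δ ≤ R → ∀ y y' : Y, dist y y' ≤ c * R →
        ∀ x : X, f x = y → ∃ x' : X, f x' = y' ∧ dist x x' ≤ R := by
  intro δ hδ
  have hωδ : 0 < ω δ := hωpos δ hδ
  refine ⟨ω δ / (2 * δ), by positivity, ?_⟩
  intro R hR y y' hdy x hfx
  have hR0 : 0 < R := lt_of_lt_of_le hδ hR
  set m : ℕ := ⌊R / δ⌋₊ with hm
  have ht1 : (1:ℝ) ≤ R / δ := (one_le_div hδ).mpr hR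
  have hm1 : 1 ≤ m := Nat.le_floor (by exact_mod_cast ht1)
  have hmle : (m : ℝ) ≤ R / δ := Nat.floor_le (by positivity)
  have hmlt : R / δ < (m : ℝ) + 1 := Nat.lt_floor_add_one _
  have hmge : R / δ / 2 ≤ (m : ℝ) := by
    rcases le_or_gt (R / δ) 2 with h | h
    · have : (1:ℝ) ≤ (m:ℝ) := by exact_mod_cast hm1
      linarith
    · linarith
  -- dist y y' ≤ m * ω δ
  have hdm : dist (f x) y' ≤ (m : ℝ) * ω δ := by
    rw [hfx]
    have : ω δ / (2 * δ) * R = ω δ * (R / δ / 2) := by ring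
    calc dist y y' ≤ ω δ / (2 * δ) * R := hdy
      _ = ω δ * (R / δ / 2) := this
      _ ≤ ω δ * (m : ℝ) := by
          exact mul_le_mul_of_nonneg_left hmge hωδ.le
      _ = (m : ℝ) * ω δ := mul_comm _ _
  obtain ⟨k, hk⟩ := Nat.exists_eq_add_of_le hm1
  have hcast : ((k : ℝ) + 1) = (m : ℝ) := by
    rw [hk]; push_cast; ring
  have hlow : ∀ x₀ : X, Metric.closedBall (f x₀) (ω δ) ⊆ f '' Metric.closedBall x₀ δ :=
    fun x₀ => (hquot x₀ δ hδ).1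
  obtain ⟨x', hfx', hdx'⟩ := uq_chain_aux hYconv f ω δ hδ hωδ.le hlow k x y'
    (by rw [hcast]; exact hdm)
  refine ⟨x', hfx', ?_⟩
  rw [hcast] at hdx'
  calc dist x x' ≤ (m : ℝ) * δ := hdx'
    _ ≤ R / δ * δ := by exact mul_le_mul_of_nonneg_right hmle hδ.le
    _ = R := div_mul_cancel₀ R hδ.ne'
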